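/- There exists a probability distribution P = {p_k : k ≥ 1} on a countably infinite alphabet with all p_k > 0 such that the tail index sequence t_n contains a subsequence {t_{n_i}} with t_{n_i} → ∞ as i → ∞ and also contains a subsequence {t_{m_i}} that is bounded above by a finite constant. Consequently P belongs to none of Domain 0, Domain 1, or Domain 2, so Domain T (the transient domain) is not empty. -/

import Mathlib

open Filter Topology

/-- The tail index `t_n = n * ∑_k p_k (1 - p_k)^n`. -/
noncomputable def tailIndex (p : ℕ → ℝ) (n : ℕ) : ℝ :=
  (n : ℝ) * ∑' k, p k * (1 - p k) ^ n

namespace Stmt19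
noncomputable def Mr (j : ℕ) : ℝ := 2 ^ (4 ^ j)
def Nn (j : ℕ) : ℕ := 2 ^ (4 ^ j)
def N' : ℕ → ℕ
  | 0 => 1
  | j + 1 => Nn j

lemma Nn_cast (j : ℕ) : ((Nn j : ℕ) : ℝ) = Mr j := by simp [Nn, Mr]
lemma Mr_pos (j : ℕ) : 0 < Mr j := by unfold Mr; positivity
lemma two_le_Mr (j : ℕ) : 2 ≤ Mr j := by
  have : (2:ℝ)^1 ≤ 2^(4^j) := by
    apply pow_le_pow_right₀ one_le_two
    exact Nat.one_le_pow _ _ (by norm_num)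
  simpa [Mr] using this
lemma one_le_Mr (j : ℕ) : 1 ≤ Mr j := by linarith [two_le_Mr j]
lemma Mr_mono : Monotone Mr := by
  intro a b hab
  exact pow_le_pow_right₀ one_le_two (Nat.pow_le_pow_right (by norm_num) hab)
lemma Mr_succ (i : ℕ) : Mr (i + 1) = Mr i ^ 4 := by
  rw [Mr, Mr, ← pow_mul, pow_succ]
lemma N'_pos (j : ℕ) : 0 < N' j := by
  cases j with
  | zero => simp [N']
  | succ j => simp only [N', Nn]; positivity

lemma inv_Mr_le (j : ℕ) : (Mr j)⁻¹ ≤ (1/2) * (1/4)^j := by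
  have h1 : (2:ℝ) * 4^j ≤ Mr j := by
    have hexp : 2 * j + 1 ≤ 4 ^ j := by
      have := Nat.lt_two_pow_self (n := 2*j)
      calc 2*j+1 ≤ 2^(2*j) := this
        _ = 4 ^ j := by rw [pow_mul]; norm_num
    calc (2:ℝ) * 4^j = 2 ^ (2*j+1) := by rw [pow_succ, pow_mul]; ring
      _ ≤ 2 ^ (4^j) := pow_le_pow_right₀ one_le_two hexp
      _ = Mr j := rfl
  rw [show (1/2 : ℝ) * (1/4)^j = ((2:ℝ) * 4^j)⁻¹ by rw [mul_inv]; ring_nf; simp]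
  exact inv_anti₀ (by positivity) h1

lemma summable_inv_Mr : Summable (fun j => (Mr j)⁻¹) := by
  apply Summable.of_nonneg_of_le (fun j => inv_nonneg.2 (Mr_pos j).le) inv_Mr_le
  exact ((summable_geometric_of_lt_one (by norm_num) (by norm_num)).mul_left _)

noncomputable def S : ℝ := ∑' j, (Mr j)⁻¹
noncomputable def p0 : ℝ := 1 - S

lemma S_le : S ≤ 2/3 := by
  have := Summable.tsum_le_tsum inv_Mr_le summable_inv_Mr
    ((summable_geometric_of_lt_one (by norm_num) (by norm_num)).mul_left (1/2 : ℝ))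
  rw [tsum_mul_left, tsum_geometric_of_lt_one (by norm_num) (by norm_num)] at this
  calc S ≤ (1/2) * (1 - 1/4)⁻¹ := this
    _ = 2/3 := by norm_num

lemma S_ge : (1/2 : ℝ) ≤ S := by
  have := Summable.le_tsum summable_inv_Mr 0 (fun j _ => inv_nonneg.2 (Mr_pos j).le)
  rw [show Mr 0 = 2 by norm_num [Mr]] at this
  calc (1/2 : ℝ) = 2⁻¹ := by norm_num
    _ ≤ S := this

lemma p0_pos : (1/3 : ℝ) ≤ p0 := by have := S_le; simp only [p0]; linarith
lemma p0_le : p0 ≤ 1/2 := by have := S_ge; simp only [p0]; linarith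

noncomputable def w : ℕ → ℝ
  | 0 => p0
  | j + 1 => ((Mr j) ^ 2)⁻¹

lemma w_pos (j : ℕ) : 0 < w j := by
  cases j with
  | zero => have := p0_pos; simp only [w]; linarith
  | succ j =>
    simp only [w]
    exact inv_pos.2 (pow_pos (Mr_pos j) 2)

lemma w_le_one (j : ℕ) : w j ≤ 1 := by
  cases j with
  | zero => have := p0_le; simp only [w]; linarith
  | succ j =>
    simp only [w]
    have h2 : (2:ℝ) ≤ Mr j := two_le_Mr j
    rw [inv_le_one_iff₀]; right; nlinarith


abbrev T := Σ j : ℕ, Fin (N' j)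


instance : Infinite T :=
  Infinite.of_injective (fun j => (⟨j, ⟨0, N'_pos j⟩⟩ : T))
    (fun a b h => congrArg Sigma.fst h)

noncomputable def e : ℕ ≃ T :=
  letI := Denumerable.ofEncodableOfInfinite T
  (Denumerable.eqv T).symm

lemma master (g : ℕ → ℝ) (hg : ∀ j, 0 ≤ g j)
    (hsum : Summable fun j => (N' j : ℝ) * g j) :
    Summable (fun k => g ((e k).1)) ∧ ∑' k, g ((e k).1) = ∑' j, (N' j : ℝ) * g j := by
  have hfib : ∀ j, ∑' _ : Fin (N' j), g j = (N' j : ℝ) * g j := by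
    intro j
    rw [tsum_fintype, Finset.sum_const, Finset.card_univ, Fintype.card_fin, nsmul_eq_mul]
  have hsT : Summable (fun x : T => g x.1) := by
    rw [summable_sigma_of_nonneg (fun x => hg x.1)]
    constructor
    · intro j; exact (hasSum_fintype _).summable
    · simpa only [hfib] using hsum
  have hre : ∑' k, g ((e k).1) = ∑' x : T, g x.1 := e.tsum_eq (fun x : T => g x.1)
  have hse : Summable (fun k => g ((e k).1)) := by
    rw [← Equiv.summable_iff e] at hsT; exact hsT
  refine ⟨hse, ?_⟩
  rw [hre, Summable.tsum_sigma hsT]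
  exact tsum_congr hfib


lemma bern {x : ℝ} (h0 : 0 ≤ x) (h1 : x ≤ 1) (t : ℕ) :
    (1 - x) ^ t * (1 + (t:ℝ) * x) ≤ 1 := by
  have hb : 1 + (t:ℝ) * x ≤ (1 + x) ^ t := one_add_mul_le_pow (by linarith) t
  have hnn : (0:ℝ) ≤ (1 - x) ^ t := pow_nonneg (by linarith) t
  calc (1 - x) ^ t * (1 + (t:ℝ) * x) ≤ (1 - x) ^ t * (1 + x) ^ t :=
        mul_le_mul_of_nonneg_left hb hnn
    _ = (1 - x ^ 2) ^ t := by rw [← mul_pow]; ring_nf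
    _ ≤ 1 := pow_le_one₀ (by nlinarith) (by nlinarith)

lemma up1 {x : ℝ} (h0 : 0 < x) (h1 : x ≤ 1) (m : ℕ) :
    (m:ℝ) * (x * (1 - x) ^ m) ≤ 1 := by
  have h := bern h0.le h1 m
  have hnn : (0:ℝ) ≤ (1 - x) ^ m := pow_nonneg (by linarith) m
  nlinarith [mul_nonneg hnn h0.le]

lemma up3 {x : ℝ} (h0 : 0 < x) (h1 : x ≤ 1) {m : ℕ} (hm : 4 ≤ m) :
    (m:ℝ) * (1 - x) ^ m ≤ 125 / ((m:ℝ) ^ 2 * x ^ 3) := by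
  set t := m / 3 with ht
  have htm : 3 * t ≤ m := by omega
  have hmt5 : (m:ℝ) ≤ 5 * t := by exact_mod_cast (by omega : m ≤ 5 * t)
  have ht1 : 1 ≤ t := by omega
  have htpos : (0:ℝ) < (t:ℝ) := by exact_mod_cast ht1
  have hmpos : (0:ℝ) < (m:ℝ) := by positivity
  have h1x : (0:ℝ) ≤ 1 - x := by linarith
  have htx : (0:ℝ) < (t:ℝ) * x := by positivity
  have hA : (1 - x) ^ m ≤ ((1 - x) ^ t) ^ 3 := by
    rw [← pow_mul]
    exact pow_le_pow_of_le_one h1x (by linarith) (by omega)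
  have hbt : (1 - x) ^ t ≤ ((t:ℝ) * x)⁻¹ := by
    rw [show ((t:ℝ)*x)⁻¹ = 1/((t:ℝ)*x) by ring, le_div_iff₀ htx]
    nlinarith [bern h0.le h1 t, pow_nonneg h1x t]
  have hnn : (0:ℝ) ≤ (1 - x) ^ t := pow_nonneg h1x t
  have hB : ((1 - x) ^ t) ^ 3 ≤ (((t:ℝ) * x)⁻¹) ^ 3 := pow_le_pow_left₀ hnn hbt 3
  have hC : (m:ℝ) * (1 - x) ^ m ≤ (m:ℝ) * (((t:ℝ) * x)⁻¹) ^ 3 :=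
    mul_le_mul_of_nonneg_left (hA.trans hB) (by positivity)
  refine hC.trans ?_
  have key : (m:ℝ) ^ 3 ≤ 125 * (t:ℝ) ^ 3 := by
    calc (m:ℝ)^3 ≤ (5*(t:ℝ))^3 := pow_le_pow_left₀ hmpos.le hmt5 3
      _ = 125 * (t:ℝ)^3 := by ring
  rw [le_div_iff₀ (by positivity : (0:ℝ) < (m:ℝ)^2 * x^3)]
  have expand : (m:ℝ) * (((t:ℝ)*x)⁻¹)^3 * ((m:ℝ)^2 * x^3) = (m:ℝ)^3 * ((t:ℝ)^3)⁻¹ := by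
    field_simp
  rw [expand, mul_inv_le_iff₀ (by positivity)]
  linarith [key]

lemma low {m : ℕ} (hm : 2 ≤ m) : (8:ℝ)⁻¹ ≤ (1 - (m:ℝ)⁻¹) ^ m := by
  have hx : (2:ℝ) ≤ (m:ℝ) := by exact_mod_cast hm
  have hx0 : (0:ℝ) < (m:ℝ) := by linarith
  have hx1 : (0:ℝ) < (m:ℝ) - 1 := by linarith
  have hne0 : (m:ℝ) ≠ 0 := ne_of_gt hx0
  have hne1 : (m:ℝ) - 1 ≠ 0 := ne_of_gt hx1
  set y : ℝ := ((m:ℝ) - 1)⁻¹ with hy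
  have hy0 : 0 < y := inv_pos.2 hx1
  have hprod : (1 - (m:ℝ)⁻¹) * (1 + y) = 1 := by
    rw [hy]
    field_simp
    ring
  have hup : (1 + y) ^ m ≤ 8 := by
    have h1 : (1 + y) ^ m ≤ Real.exp y ^ m := by
      apply pow_le_pow_left₀ (by linarith)
      linarith [Real.add_one_le_exp y]
    have h2 : Real.exp y ^ m = Real.exp ((m:ℝ) * y) := by rw [← Real.exp_nat_mul]
    have h3 : (m:ℝ) * y ≤ 2 := by
      rw [hy, mul_inv_le_iff₀ hx1]
      linarith
    have h5 : Real.exp 2 < 8 := by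
      have := Real.exp_one_lt_d9
      have h6 : Real.exp 2 = Real.exp 1 * Real.exp 1 := by rw [← Real.exp_add]; norm_num
      rw [h6]; nlinarith [Real.exp_pos 1]
    calc (1 + y) ^ m ≤ Real.exp y ^ m := h1
      _ = Real.exp ((m:ℝ)*y) := h2
      _ ≤ Real.exp 2 := Real.exp_le_exp.2 h3
      _ ≤ 8 := h5.le
  have hpow : (1 - (m:ℝ)⁻¹) ^ m * (1 + y) ^ m = 1 := by
    rw [← mul_pow, hprod, one_pow]
  rw [eq_inv_of_mul_eq_one_left hpow]
  exact inv_anti₀ (by positivity) hup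


noncomputable def p : ℕ → ℝ := fun k => w ((e k).1)

lemma wN_succ (j : ℕ) : (N' (j+1) : ℝ) * w (j+1) = (Mr j)⁻¹ := by
  show (Nn j : ℝ) * ((Mr j)^2)⁻¹ = (Mr j)⁻¹
  rw [Nn_cast, sq]
  field_simp

lemma mass_summable : Summable (fun j => (N' j : ℝ) * w j) := by
  rw [← summable_nat_add_iff 1]
  simp only [wN_succ]
  exact summable_inv_Mr

lemma mass_eq : ∑' j, (N' j : ℝ) * w j = 1 := by
  rw [Summable.tsum_eq_zero_add mass_summable]
  simp only [wN_succ]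
  have h0 : (N' 0 : ℝ) * w 0 = p0 := by simp [N', w]
  rw [h0, show ∑' j, (Mr j)⁻¹ = S from rfl]
  simp [p0]

lemma p_pos (k : ℕ) : 0 < p k := w_pos _

lemma wN_nonneg (j : ℕ) : 0 ≤ (N' j : ℝ) * w j :=
  mul_nonneg (Nat.cast_nonneg _) (w_pos j).le

lemma tsum_p : ∑' k, p k = 1 :=
  ((master w (fun j => (w_pos j).le) mass_summable).2).trans mass_eq

/-- the summand at time n, block j -/
noncomputable def G (n j : ℕ) : ℝ := (n:ℝ) * ((N' j : ℝ) * (w j * (1 - w j) ^ n))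

lemma G_nonneg (n j : ℕ) : 0 ≤ G n j := by
  have := w_pos j; have := w_le_one j
  have : (0:ℝ) ≤ (1 - w j) ^ n := pow_nonneg (by linarith) n
  unfold G
  positivity

lemma F_summable (n : ℕ) : Summable (fun j => (N' j : ℝ) * (w j * (1 - w j) ^ n)) := by
  apply Summable.of_nonneg_of_le _ _ mass_summable
  · intro j
    have h1 := w_pos j; have h2 := w_le_one j
    have : (0:ℝ) ≤ (1 - w j) ^ n := pow_nonneg (by linarith) n
    positivity
  · intro j
    have h1 := w_pos j; have h2 := w_le_one j
    have hle : (1 - w j) ^ n ≤ 1 := pow_le_one₀ (by linarith) (by linarith)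
    have : w j * (1 - w j) ^ n ≤ w j := by nlinarith
    exact mul_le_mul_of_nonneg_left this (Nat.cast_nonneg _)

lemma G_summable (n : ℕ) : Summable (G n) := (F_summable n).mul_left _

lemma tailIndex_eq (n : ℕ) : tailIndex p n = ∑' j, G n j := by
  have h := (master (fun j => w j * (1 - w j) ^ n)
    (fun j => by
      have h1 := w_pos j; have h2 := w_le_one j
      have : (0:ℝ) ≤ (1 - w j) ^ n := pow_nonneg (by linarith) n
      positivity)
    (F_summable n)).2
  unfold tailIndex G
  rw [show (fun k => p k * (1 - p k) ^ n) =
      (fun k => (fun j => w j * (1 - w j) ^ n) ((e k).1)) from rfl]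
  rw [h, tsum_mul_left]
lemma two_le_Nn (j : ℕ) : 2 ≤ Nn j := by
  have : 2^1 ≤ 2^(4^j) := Nat.pow_le_pow_right (by norm_num) (Nat.one_le_pow _ _ (by norm_num))
  simpa [Nn] using this

lemma lower (i : ℕ) : Mr i / 8 ≤ tailIndex p (Nn i ^ 2) := by
  rw [tailIndex_eq]
  refine le_trans ?_ (Summable.le_tsum (G_summable (Nn i ^ 2)) (i+1) (fun j _ => G_nonneg _ j))
  have hcast : ((Nn i ^ 2 : ℕ) : ℝ) = Mr i ^ 2 := by
    push_cast [Nn_cast]; ring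
  have hinv : ((Nn i ^ 2 : ℕ) : ℝ)⁻¹ = (Mr i ^ 2)⁻¹ := by rw [hcast]
  have hm2 : 2 ≤ Nn i ^ 2 := le_trans (two_le_Nn i) (Nat.le_self_pow (by norm_num) _)
  have hlow : (8:ℝ)⁻¹ ≤ (1 - (Mr i ^ 2)⁻¹) ^ (Nn i ^ 2) := by
    rw [← hinv]; exact low hm2
  have key : ∀ Q : ℝ, Mr i^2 * ((Nn i : ℝ) * (((Mr i)^2)⁻¹ * Q)) = Mr i * Q := by
    intro Q
    have hne : Mr i ≠ 0 := ne_of_gt (Mr_pos i)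
    rw [Nn_cast]
    field_simp
  have hG : G (Nn i ^ 2) (i+1) = Mr i * (1 - (Mr i ^ 2)⁻¹) ^ (Nn i ^ 2) := by
    unfold G
    simp only [N', w]
    rw [hcast]
    exact key _
  rw [hG]
  calc Mr i / 8 = Mr i * (8:ℝ)⁻¹ := by ring
    _ ≤ Mr i * (1 - (Mr i ^ 2)⁻¹) ^ (Nn i ^ 2) :=
        mul_le_mul_of_nonneg_left hlow (Mr_pos i).le
lemma pow4_add (a b : ℕ) : 4^a + b ≤ 4^(a+b) := by
  have h1 : b + 1 ≤ 4^b := by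
    have h0 := Nat.lt_two_pow_self (n := b)
    have h2 : 2^b ≤ 4^b := Nat.pow_le_pow_left (by norm_num) b
    omega
  have h3 : 1 ≤ 4^a := Nat.one_le_pow _ _ (by norm_num)
  calc 4^a + b ≤ 4^a * (b+1) := by nlinarith
    _ ≤ 4^a * 4^b := Nat.mul_le_mul_left _ h1
    _ = 4^(a+b) := (pow_add 4 a b).symm

lemma i_add_one_le_Nn (i : ℕ) : i + 1 ≤ Nn i := by
  have ha := Nat.lt_two_pow_self (n := i)
  have hb : 2^i ≤ 4^i := Nat.pow_le_pow_left (by norm_num) i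
  have hd : 2^i ≤ 2^(4^i) := Nat.pow_le_pow_right (by norm_num) (ha.le.trans hb)
  show i + 1 ≤ 2^(4^i)
  omega

lemma upper (i : ℕ) : tailIndex p (Nn (i+1)) ≤ 130 := by
  set m := Nn (i+1) with hmdef
  have hmr : (m : ℝ) = Mr (i+1) := Nn_cast (i+1)
  have hm4 : 4 ≤ m := by
    have : 2^2 ≤ 2^(4^(i+1)) :=
      Nat.pow_le_pow_right (by norm_num) (le_trans (by norm_num) (Nat.le_self_pow (by omega) 4))
    simpa [hmdef, Nn] using this
  have hm0 : (0:ℝ) < (m:ℝ) := by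
    have : (0:ℕ) < m := by omega
    exact_mod_cast this
  have hm8 : (m:ℝ)^2 = Mr i ^ 8 := by rw [hmr, Mr_succ]; ring
  rw [tailIndex_eq, ← Summable.sum_add_tsum_nat_add (i+2) (G_summable m)]
  have hii : ((i:ℝ) + 1) ≤ Mr i ^ 3 := by
    have h2 : ((i+1 : ℕ) : ℝ) ≤ (Nn i : ℝ) := Nat.cast_le.2 (i_add_one_le_Nn i)
    rw [Nn_cast] at h2
    push_cast at h2
    calc ((i:ℝ)+1) ≤ Mr i := h2
      _ = Mr i ^ 1 := (pow_one _).symm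
      _ ≤ Mr i ^ 3 := pow_le_pow_right₀ (one_le_Mr i) (by norm_num)
  have hipos : (0:ℝ) < (i:ℝ) + 1 := by positivity
  have hA : ∑ j ∈ Finset.range (i+2), G m j ≤ 126 := by
    rw [Finset.sum_range_succ']
    have hA1 : G m 0 ≤ 1 := by
      have h := up1 (x := p0) (by linarith [p0_pos]) (by linarith [p0_le]) m
      unfold G
      simp only [N', w, Nat.cast_one, one_mul]
      exact h
    have hA2 : ∀ j ∈ Finset.range (i+1), G m (j+1) ≤ 125 / ((i:ℝ)+1) := by
      intro j hj
      have hji : j ≤ i := Nat.lt_succ_iff.1 (Finset.mem_range.1 hj)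
      have hMj := Mr_pos j
      have hMjne : Mr j ≠ 0 := ne_of_gt hMj
      have hx0 : (0:ℝ) < ((Mr j)^2)⁻¹ := inv_pos.2 (pow_pos hMj 2)
      have hx1 : ((Mr j)^2)⁻¹ ≤ 1 := w_le_one (j+1)
      have h3 := up3 hx0 hx1 hm4
      have hGj : G m (j+1) = Mr j * (((Mr j)^2)⁻¹ * ((m:ℝ) * (1 - ((Mr j)^2)⁻¹)^m)) := by
        unfold G
        simp only [N', w, Nn_cast]
        ring
      have step1 : G m (j+1) ≤ Mr j * (((Mr j)^2)⁻¹ * (125 / ((m:ℝ)^2 * (((Mr j)^2)⁻¹)^3))) := by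
        rw [hGj]
        apply mul_le_mul_of_nonneg_left _ hMj.le
        exact mul_le_mul_of_nonneg_left h3 hx0.le
      have step2 : Mr j * (((Mr j)^2)⁻¹ * (125 / ((m:ℝ)^2 * (((Mr j)^2)⁻¹)^3)))
          = 125 * (Mr j)^5 / (m:ℝ)^2 := by
        field_simp
      have step3 : 125 * (Mr j)^5 / (m:ℝ)^2 ≤ 125 / ((i:ℝ)+1) := by
        have hmsq : (0:ℝ) < (m:ℝ)^2 := pow_pos hm0 2
        rw [div_le_div_iff₀ hmsq hipos, hm8]
        have hj5 : (Mr j)^5 ≤ (Mr i)^5 := pow_le_pow_left₀ hMj.le (Mr_mono hji) 5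
        have hprod : (Mr j)^5 * ((i:ℝ)+1) ≤ (Mr i)^5 * (Mr i)^3 :=
          mul_le_mul hj5 hii hipos.le (pow_pos (Mr_pos i) 5).le
        have h58 : (Mr i)^5 * (Mr i)^3 = (Mr i)^8 := by ring
        rw [h58] at hprod
        linarith
      rw [step2] at step1
      exact step1.trans step3
    have := add_le_add (Finset.sum_le_sum hA2) hA1
    refine this.trans ?_
    rw [Finset.sum_const, Finset.card_range, nsmul_eq_mul]
    push_cast
    rw [mul_div_cancel₀ _ (ne_of_gt hipos)]
    norm_num
  have hB : ∑' j, G m (j + (i+2)) ≤ 2 := by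
    have hterm : ∀ j, G m (j + (i+2)) ≤ (1/2:ℝ)^j := by
      intro j
      have hidx : j + (i+2) = (j+i+1) + 1 := by omega
      set J := j + i + 1 with hJ
      have hMJ := Mr_pos J
      have hgle : G m (j + (i+2)) ≤ (m:ℝ) * (Mr J)⁻¹ := by
        rw [hidx]
        unfold G
        simp only [N', w, Nn_cast]
        have hx0 : (0:ℝ) < ((Mr J)^2)⁻¹ := inv_pos.2 (pow_pos hMJ 2)
        have hx1 : ((Mr J)^2)⁻¹ ≤ 1 := w_le_one (J+1)
        have hple : (1 - ((Mr J)^2)⁻¹)^m ≤ 1 := pow_le_one₀ (by linarith) (by linarith)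
        have he : Mr J * ((Mr J)^2)⁻¹ = (Mr J)⁻¹ := by
          rw [sq]
          field_simp
        have h1 : Mr J * (((Mr J)^2)⁻¹ * (1 - ((Mr J)^2)⁻¹)^m) ≤ (Mr J)⁻¹ := by
          calc Mr J * (((Mr J)^2)⁻¹ * (1 - ((Mr J)^2)⁻¹)^m)
              ≤ Mr J * (((Mr J)^2)⁻¹ * 1) := by
                apply mul_le_mul_of_nonneg_left _ hMJ.le
                exact mul_le_mul_of_nonneg_left hple hx0.le
            _ = (Mr J)⁻¹ := by rw [mul_one, he]
        exact mul_le_mul_of_nonneg_left h1 hm0.le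
      refine hgle.trans ?_
      have hnat : m * 2^j ≤ Nn J := by
        have he : 4^(i+1) + j ≤ 4^((i+1)+j) := pow4_add (i+1) j
        calc m * 2^j = 2^(4^(i+1)+j) := by rw [hmdef]; show 2^(4^(i+1)) * 2^j = _; rw [← pow_add]
          _ ≤ 2^(4^((i+1)+j)) := Nat.pow_le_pow_right (by norm_num) he
          _ = Nn J := by rw [hJ]; simp only [Nn]; congr 2; omega
      have hcast : (m:ℝ) * 2^j ≤ Mr J := by
        have h := (Nat.cast_le (α := ℝ)).2 hnat
        push_cast at h
        rw [Nn_cast J] at h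
        exact h
      rw [mul_inv_le_iff₀ hMJ]
      have h2j : (0:ℝ) < 2^j := by positivity
      have hhalf : (1/2:ℝ)^j * Mr J = Mr J / 2^j := by
        rw [div_pow, one_pow]
        ring
      rw [hhalf, le_div_iff₀ h2j]
      exact hcast
    have hsum1 : Summable (fun j => G m (j + (i+2))) :=
      (summable_nat_add_iff (i+2)).2 (G_summable m)
    have hsum2 : Summable (fun j => (1/2:ℝ)^j) :=
      summable_geometric_of_lt_one (by norm_num) (by norm_num)
    calc ∑' j, G m (j + (i+2)) ≤ ∑' j, (1/2:ℝ)^j := Summable.tsum_le_tsum hterm hsum1 hsum2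
      _ = (1 - 1/2)⁻¹ := tsum_geometric_of_lt_one (by norm_num) (by norm_num)
      _ = 2 := by norm_num
  linarith [hA, hB]
lemma Nn_strictMono : StrictMono Nn := fun a b h =>
  Nat.pow_lt_pow_right (by norm_num) (Nat.pow_lt_pow_right (by norm_num) h)

lemma two_pow_le_Mr (i : ℕ) : (2:ℝ)^i ≤ Mr i := by
  apply pow_le_pow_right₀ one_le_two
  have ha := Nat.lt_two_pow_self (n := i)
  have hb : 2^i ≤ 4^i := Nat.pow_le_pow_left (by norm_num) i
  omega

lemma hdiv : Tendsto (fun i => tailIndex p (Nn i ^ 2)) atTop atTop := by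
  apply tendsto_atTop_mono (fun i => ?_)
    ((tendsto_pow_atTop_atTop_of_one_lt one_lt_two).atTop_div_const
      (by norm_num : (0:ℝ) < 8))
  calc (2:ℝ)^i / 8 ≤ Mr i / 8 := by
        have := two_pow_le_Mr i
        linarith
    _ ≤ tailIndex p (Nn i ^ 2) := lower i

end Stmt19

open Stmt19

/-- There is a positive distribution `P` on a countably infinite alphabet whose tail index
sequence has a subsequence tending to `∞` and a subsequence bounded above; consequently
`P` is in none of Domain 0 (`t_n → 0`), Domain 1 (`limsup t_n` a finite positive
constant), or Domain 2 (`t_n → ∞`), so Domain T is not empty. -/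
theorem stmt19 :
    ∃ p : ℕ → ℝ, (∀ k, 0 < p k) ∧ (∑' k, p k = 1) ∧
      (∃ n : ℕ → ℕ, StrictMono n ∧
        Tendsto (fun i => tailIndex p (n i)) atTop atTop) ∧
      (∃ m : ℕ → ℕ, StrictMono m ∧ ∃ B : ℝ, ∀ i, tailIndex p (m i) ≤ B) ∧
      ¬ Tendsto (tailIndex p) atTop (𝓝 0) ∧
      ¬ (∃ c : ℝ, 0 < c ∧
          Filter.limsup (fun n : ℕ => ((tailIndex p n : ℝ) : EReal)) atTop = (c : EReal)) ∧
      ¬ Tendsto (tailIndex p) atTop atTop := by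
  have hnmono : StrictMono (fun i => Nn i ^ 2) := fun a b h =>
    Nat.pow_lt_pow_left (Nn_strictMono h) (by norm_num)
  have hmmono : StrictMono (fun i => Nn (i+1)) := fun a b h =>
    Nn_strictMono (by omega)
  have hdivtop : Tendsto (fun i => tailIndex Stmt19.p (Nn i ^ 2)) atTop atTop := hdiv
  refine ⟨Stmt19.p, p_pos, tsum_p, ⟨fun i => Nn i ^ 2, hnmono, hdivtop⟩,
    ⟨fun i => Nn (i+1), hmmono, 130, fun i => upper i⟩, ?_, ?_, ?_⟩
  · intro h
    have h2 := h.comp hnmono.tendsto_atTop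
    have e1 : ∀ᶠ i in atTop, tailIndex Stmt19.p (Nn i ^ 2) < 1 :=
      h2.eventually (gt_mem_nhds (show (0:ℝ) < 1 by norm_num))
    have e2 := hdivtop.eventually_ge_atTop 1
    obtain ⟨i, hi1, hi2⟩ := (e1.and e2).exists
    linarith
  · rintro ⟨c, hc0, hlim⟩
    have hlt : Filter.limsup (fun n : ℕ => ((tailIndex Stmt19.p n : ℝ) : EReal)) atTop
        < ((c+1 : ℝ) : EReal) := by
      rw [hlim]
      exact_mod_cast lt_add_one c
    have hev := eventually_lt_of_limsup_lt hlt
    have hev' : ∀ᶠ N in atTop, tailIndex Stmt19.p N < c + 1 :=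
      hev.mono (fun N hN => by exact_mod_cast hN)
    have hevi := hnmono.tendsto_atTop.eventually hev'
    have hge := hdivtop.eventually_ge_atTop (c+1)
    obtain ⟨i, h1, h2⟩ := (hevi.and hge).exists
    linarith
  · intro h
    have h2 := h.comp hmmono.tendsto_atTop
    obtain ⟨i, hi⟩ := (h2.eventually_ge_atTop 131).exists
    have := upper i
    simp only [Function.comp] at hi
    linarith
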